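/- Let d ≥ 1 and let F ∈ ℤ[x₁,…,xₙ] be a nonzero polynomial that is d-th-power-free, i.e. there is no nonconstant g ∈ ℤ[x₁,…,xₙ] with g^d ∣ F. Then for all but finitely many prime numbers p, the reduction of F modulo p is d-th-power-free in 𝔽_p[x₁,…,xₙ], i.e. there is no nonconstant g ∈ 𝔽_p[x₁,…,xₙ] with g^d dividing the image of F in 𝔽_p[x₁,…,xₙ]. -/

import Mathlib

section Helpers

open Polynomial
open scoped nonZeroDivisors



private lemma finSuccEquiv_map_commute {A B : Type*} [CommRing A] [CommRing B] (φ : A →+* B)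
    {m : ℕ} (p : MvPolynomial (Fin (m + 1)) A) :
    MvPolynomial.finSuccEquiv B m (MvPolynomial.map φ p) =
      Polynomial.map (MvPolynomial.map φ) (MvPolynomial.finSuccEquiv A m p) := by
  have h : ((MvPolynomial.finSuccEquiv B m :
      MvPolynomial (Fin (m + 1)) B →+* Polynomial (MvPolynomial (Fin m) B)).comp
        (MvPolynomial.map φ)) =
      (Polynomial.mapRingHom (MvPolynomial.map φ)).comp
        (MvPolynomial.finSuccEquiv A m :
          MvPolynomial (Fin (m + 1)) A →+* Polynomial (MvPolynomial (Fin m) A)) := by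
    apply MvPolynomial.ringHom_ext
    · intro a
      simp [MvPolynomial.finSuccEquiv_apply]
    · intro i
      refine Fin.cases ?_ ?_ i
      · simp [MvPolynomial.finSuccEquiv_X_zero]
      · intro j
        simp [MvPolynomial.finSuccEquiv_X_succ]
  exact RingHom.congr_fun h p



section Univariate

variable {S : Type*} [CommRing S]

private lemma pow_dvd_derivative_of_pow_succ_dvd {g f : S[X]} {k : ℕ}
    (h : g ^ (k + 1) ∣ f) : g ^ k ∣ derivative f := by
  obtain ⟨u, rfl⟩ := h
  rw [derivative_mul, derivative_pow, Nat.add_sub_cancel]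
  exact dvd_add ⟨C ((k + 1 : ℕ) : S) * derivative g * u, by ring⟩ ⟨g * derivative u, by ring⟩

private lemma pow_dvd_iterate_derivative_of_pow_dvd {g f : S[X]} {d : ℕ} (h : g ^ d ∣ f)
    (j : ℕ) : g ^ (d - j) ∣ derivative^[j] f := by
  induction j with
  | zero => simpa using h
  | succ j ih =>
    rw [Function.iterate_succ_apply']
    rcases le_or_gt d (j + 1) with hle | hlt
    · rw [Nat.sub_eq_zero_of_le hle, pow_zero]; exact one_dvd _
    · have : d - j = (d - (j + 1)) + 1 := by omega
      rw [this] at ih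
      exact pow_dvd_derivative_of_pow_succ_dvd ih

private lemma natDegree_pos_of_prime {K : Type*} [Field K] {π : K[X]} (hπ : Prime π) :
    0 < π.natDegree := by
  by_contra h
  push_neg at h
  have h0 : π.natDegree = 0 := Nat.le_zero.mp h
  have hC : π = C (π.coeff 0) := Polynomial.eq_C_of_natDegree_eq_zero h0
  apply hπ.not_unit
  rw [hC]
  refine Polynomial.isUnit_C.2 (isUnit_iff_ne_zero.2 fun hc => hπ.ne_zero ?_)
  rw [hC, hc, map_zero]

private lemma exists_pow_mul_not_dvd {K : Type*} [Field K] {π : K[X]} (hπ : Prime π)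
    (f : K[X]) (hf : f ≠ 0) : ∃ e u, f = π ^ e * u ∧ ¬ π ∣ u := by
  by_cases h : π ∣ f
  · obtain ⟨f1, rfl⟩ := h
    have hf1 : f1 ≠ 0 := right_ne_zero_of_mul hf
    have hdec : f1.natDegree < (π * f1).natDegree := by
      rw [Polynomial.natDegree_mul hπ.ne_zero hf1]
      have := natDegree_pos_of_prime hπ; omega
    obtain ⟨e, u, h1, h2⟩ := exists_pow_mul_not_dvd hπ f1 hf1
    exact ⟨e + 1, u, by rw [h1]; ring, h2⟩
  · exact ⟨0, f, by rw [pow_zero, one_mul], h⟩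
termination_by f.natDegree

private lemma not_dvd_iterate_derivative_pow_mul {K : Type*} [Field K] [CharZero K] {π : K[X]}
    (hπ : Prime π) : ∀ (e : ℕ) (u : K[X]), ¬ π ∣ u → ¬ π ∣ derivative^[e] (π ^ e * u) := by
  have hπd : 0 < π.natDegree := natDegree_pos_of_prime hπ
  have hπ' : ¬ π ∣ derivative π := by
    intro hdvd
    have hne : derivative π ≠ 0 := fun h0 => by
      have := Polynomial.natDegree_eq_zero_of_derivative_eq_zero h0; omega
    exact hne (Polynomial.eq_zero_of_dvd_of_natDegree_lt hdvd
      (Polynomial.natDegree_derivative_lt (by omega)))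
  intro e
  induction e with
  | zero => intro u hu; simpa using hu
  | succ e ih =>
    intro u hu
    have key : derivative (π ^ (e + 1) * u) =
        π ^ e * (C ((e + 1 : ℕ) : K) * derivative π * u + π * derivative u) := by
      rw [derivative_mul, derivative_pow, Nat.add_sub_cancel]; ring
    rw [Function.iterate_succ_apply, key]
    apply ih
    intro hdvd
    have h1 : π ∣ C ((e + 1 : ℕ) : K) * derivative π * u :=
      (dvd_add_left (dvd_mul_right π _)).mp hdvd
    rcases hπ.dvd_mul.mp h1 with h2 | h2
    · rcases hπ.dvd_mul.mp h2 with h3 | h3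
      · exact hπ.not_unit (isUnit_of_dvd_unit h3
          (Polynomial.isUnit_C.2 (isUnit_iff_ne_zero.2 (Nat.cast_ne_zero.2 (Nat.succ_ne_zero e)))))
      · exact hπ' h3
    · exact hu h2

end Univariate

private lemma isPrimitive_pow {R : Type*} [CommRing R] [IsDomain R] [NormalizedGCDMonoid R]
    {p : R[X]} (hp : p.IsPrimitive) (k : ℕ) : (p ^ k).IsPrimitive := by
  induction k with
  | zero => simpa using Polynomial.isPrimitive_one
  | succ k ih => rw [pow_succ]; exact ih.mul hp

private lemma exists_certificate {R : Type*} [CommRing R] [IsDomain R]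
    [UniqueFactorizationMonoid R] [CharZero R] {d : ℕ} (hd : 1 ≤ d)
    (f : R[X]) (hf : f ≠ 0)
    (hirr : ∀ q : R[X], 1 ≤ q.natDegree → ¬ q ^ d ∣ f) :
    ∃ (B : Fin d → R[X]) (c : R), c ≠ 0 ∧
      ∑ j : Fin d, B j * derivative^[(j : ℕ)] f = C c := by
  classical
  letI : StrongNormalizationMonoid R := UniqueFactorizationMonoid.strongNormalizationMonoid
  letI : NormalizedGCDMonoid R := UniqueFactorizationMonoid.toNormalizedGCDMonoid R
  set K := FractionRing R
  haveI : CharZero K := charZero_of_injective_algebraMap (IsFractionRing.injective R K)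
  set φ : R →+* K := algebraMap R K with hφdef
  have hφinj : Function.Injective φ := IsFractionRing.injective R K
  set F : K[X] := f.map φ with hFdef
  have hF0 : F ≠ 0 := fun h => hf (Polynomial.map_injective φ hφinj (by simpa using h))
  -- Step 1: no prime of K[X] divides all of the first d iterated derivatives of F
  have key : ∀ π : K[X], Prime π → ∃ j < d, ¬ π ∣ derivative^[j] F := by
    intro π hπ
    by_contra hcon
    push_neg at hcon
    obtain ⟨e, u, heu, hu⟩ := exists_pow_mul_not_dvd hπ F hF0
    by_cases hed : e < d
    · exact not_dvd_iterate_derivative_pow_mul hπ e u hu (heu ▸ hcon e hed)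
    · -- π ^ d ∣ F : contradict power-freeness via Gauss's lemma
      have hπdF : π ^ d ∣ F :=
        heu ▸ dvd_mul_of_dvd_left (pow_dvd_pow π (le_of_not_gt hed)) u
      obtain ⟨s, hs⟩ := IsLocalization.integerNormalization_map_to_map R⁰ π
      set q0 : R[X] := IsLocalization.integerNormalization R⁰ π with hq0def
      have hs0 : (s : R) ≠ 0 := nonZeroDivisors.ne_zero s.2
      have hφs : φ (s : R) ≠ 0 := fun h => hs0 (hφinj (by simpa using h))
      have hq0K : q0.map φ = C (φ (s : R)) * π := by
        rw [hs, Algebra.smul_def]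
        norm_cast
      have hq00 : q0 ≠ 0 := by
        intro h0
        rw [h0, Polynomial.map_zero] at hq0K
        rcases (mul_eq_zero.mp hq0K.symm) with h | h
        · exact (Polynomial.C_ne_zero.mpr hφs) h
        · exact hπ.ne_zero h
      set q : R[X] := q0.primPart with hqdef
      have hqprim : q.IsPrimitive := q0.isPrimitive_primPart
      have hcont0 : φ q0.content ≠ 0 := fun h =>
        (Polynomial.content_eq_zero_iff.not.mpr hq00) (hφinj (by simpa using h))
      have hsplit : C (φ q0.content) * q.map φ = C (φ (s : R)) * π := by
        rw [← hq0K]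
        conv_rhs => rw [q0.eq_C_content_mul_primPart]
        rw [Polynomial.map_mul, Polynomial.map_C]
      have hCcu : IsUnit (C (φ q0.content)) := Polynomial.isUnit_C.2 (isUnit_iff_ne_zero.2 hcont0)
      have hCsu : IsUnit (C (φ (s : R))) := Polynomial.isUnit_C.2 (isUnit_iff_ne_zero.2 hφs)
      have hassoc : Associated (q.map φ) π := by
        apply associated_of_dvd_dvd
        · have h1 : q.map φ ∣ C (φ (s : R)) * π := ⟨C (φ q0.content), by rw [← hsplit]; ring⟩
          exact hCsu.dvd_mul_left.mp h1
        · have h1 : π ∣ C (φ q0.content) * q.map φ := ⟨C (φ (s : R)), by rw [hsplit]; ring⟩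
          exact hCcu.dvd_mul_left.mp h1
      have hfc0 : φ f.content ≠ 0 := fun h =>
        (Polynomial.content_eq_zero_iff.not.mpr hf) (hφinj (by simpa using h))
      have hπdprim : π ^ d ∣ f.primPart.map φ := by
        have h4 : F = C (φ f.content) * f.primPart.map φ := by
          conv_lhs => rw [hFdef]
          conv_lhs => rw [f.eq_C_content_mul_primPart]
          rw [Polynomial.map_mul, Polynomial.map_C]
        have h5 := hπdF
        rw [h4] at h5
        exact ((Polynomial.isUnit_C.2 (isUnit_iff_ne_zero.2 hfc0)).dvd_mul_left).mp h5
      have hqdvd : (q ^ d).map φ ∣ f.primPart.map φ := by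
        rw [Polynomial.map_pow]
        exact (Associated.dvd_iff_dvd_left (hassoc.pow_pow)).mpr hπdprim
      have hqd : q ^ d ∣ f :=
        ((isPrimitive_pow hqprim d).dvd_of_fraction_map_dvd_fraction_map
          hqdvd).trans f.primPart_dvd
      have hqdeg : 1 ≤ q.natDegree := by
        obtain ⟨v, hv⟩ := hassoc
        have hv0 : (v : K[X]) ≠ 0 := Units.ne_zero v
        have hq0' : q.map φ ≠ 0 := fun h => by
          rw [h, zero_mul] at hv; exact hπ.ne_zero hv.symm
        have := Polynomial.natDegree_mul hq0' hv0
        rw [hv] at this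
        have hvdeg : (v : K[X]).natDegree = 0 := Polynomial.natDegree_eq_zero_of_isUnit v.isUnit
        have hmapdeg : (q.map φ).natDegree = q.natDegree :=
          Polynomial.natDegree_map_eq_of_injective hφinj q
        have := natDegree_pos_of_prime hπ
        omega
      exact hirr q hqdeg hqd
  -- Step 2: Bezout identity over K
  have hspan : Ideal.span (Set.range fun j : Fin d => derivative^[(j : ℕ)] F) = ⊤ := by
    by_contra hne
    obtain ⟨M, hMmax, hle⟩ := Ideal.exists_le_maximal _ hne
    haveI := hMmax.isPrime
    have hMbot : M ≠ ⊥ := by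
      intro hbot
      have hmem : F ∈ M := hle (Ideal.subset_span ⟨⟨0, hd⟩, by simp⟩)
      rw [hbot] at hmem
      exact hF0 (by simpa using hmem)
    obtain ⟨j, hj, hnd⟩ := key (Submodule.IsPrincipal.generator M)
      (Submodule.IsPrincipal.prime_generator_of_isPrime M hMbot)
    exact hnd ((Submodule.IsPrincipal.mem_iff_generator_dvd M).mp
      (hle (Ideal.subset_span ⟨⟨j, hj⟩, rfl⟩)))
  have h1 : (1 : K[X]) ∈ Ideal.span (Set.range fun j : Fin d => derivative^[(j : ℕ)] F) :=
    hspan ▸ Submodule.mem_top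
  rw [Ideal.span, Submodule.mem_span_range_iff_exists_fun] at h1
  obtain ⟨b, hb⟩ := h1
  simp only [smul_eq_mul] at hb
  -- Step 3: clear denominators
  choose s hs using fun j : Fin d => IsLocalization.integerNormalization_map_to_map R⁰ (b j)
  set c : R := ∏ j : Fin d, (s j : R) with hc
  have hc0 : c ≠ 0 :=
    Finset.prod_ne_zero_iff.mpr fun j _ => nonZeroDivisors.ne_zero (s j).2
  refine ⟨fun j => C (∏ k ∈ Finset.univ.erase j, ((s k : R))) *
    IsLocalization.integerNormalization R⁰ (b j), c, hc0, ?_⟩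
  apply Polynomial.map_injective φ hφinj
  rw [Polynomial.map_sum, Polynomial.map_C]
  calc
    ∑ j : Fin d, (C (∏ k ∈ Finset.univ.erase j, ((s k : R))) *
        IsLocalization.integerNormalization R⁰ (b j) * derivative^[(j : ℕ)] f).map φ
        = ∑ j : Fin d, C (φ c) * (b j * derivative^[(j : ℕ)] F) := by
      refine Finset.sum_congr rfl fun j _ => ?_
      rw [Polynomial.map_mul, Polynomial.map_mul, Polynomial.map_C, hs j, Algebra.smul_def]
      have herase : (∏ k ∈ Finset.univ.erase j, ((s k : R))) * (s j : R) = c :=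
        Finset.prod_erase_mul _ _ (Finset.mem_univ j)
      rw [hFdef, Polynomial.iterate_derivative_map]
      have halg : (algebraMap R K[X]) ((s j : R)) = C (φ (s j : R)) := rfl
      rw [halg, ← herase, map_mul, Polynomial.C_mul]
      ring
    _ = C (φ c) := by rw [← Finset.mul_sum, hb, mul_one]


end Helpers

open MvPolynomial

/-- **Power-freeness is preserved by reduction mod almost all primes.** If
`F ∈ ℤ[x₁,…,xₙ]` is nonzero and `d`-th-power-free (no nonconstant `g` satisfies
`g^d ∣ F`), then for all but finitely many primes `p` the reduction of `F`
modulo `p` is `d`-th-power-free in `𝔽_p[x₁,…,xₙ]`. -/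
theorem power_free_reduction (n d : ℕ) (hd : 1 ≤ d)
    (F : MvPolynomial (Fin n) ℤ) (hF : F ≠ 0)
    (hpf : ¬ ∃ g : MvPolynomial (Fin n) ℤ, 0 < g.totalDegree ∧ g ^ d ∣ F) :
    {p : ℕ | p.Prime ∧ ∃ g : MvPolynomial (Fin n) (ZMod p), 0 < g.totalDegree ∧
        g ^ d ∣ MvPolynomial.map (Int.castRingHom (ZMod p)) F}.Finite := by
  classical
  cases n with
  | zero =>
    apply Set.Finite.subset Set.finite_empty
    rintro p ⟨hp, g, htd, -⟩
    obtain ⟨a, rfl⟩ := MvPolynomial.C_surjective (Fin 0) g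
    simp [MvPolynomial.totalDegree_C] at htd
  | succ m =>
    have hmain : ∀ i : Fin (m + 1),
        ∃ (B : Fin d → Polynomial (MvPolynomial (Fin m) ℤ)) (c : MvPolynomial (Fin m) ℤ),
          c ≠ 0 ∧ ∑ j : Fin d, B j * Polynomial.derivative^[(j : ℕ)]
            (MvPolynomial.finSuccEquiv ℤ m
              (MvPolynomial.rename (⇑(Equiv.swap (0 : Fin (m + 1)) i)) F)) =
            Polynomial.C c := by
      intro i
      have hswap : (⇑(Equiv.swap (0 : Fin (m + 1)) i) ∘ ⇑(Equiv.swap (0 : Fin (m + 1)) i)) = id :=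
        funext fun x => Equiv.swap_apply_self _ _ x
      set Fi := MvPolynomial.finSuccEquiv ℤ m
        (MvPolynomial.rename (⇑(Equiv.swap (0 : Fin (m + 1)) i)) F) with hFi
      have hFi0 : Fi ≠ 0 := by
        intro h
        apply hF
        have h1 : MvPolynomial.rename (⇑(Equiv.swap (0 : Fin (m + 1)) i)) F = 0 :=
          (MvPolynomial.finSuccEquiv ℤ m).injective (by rw [map_zero]; exact h)
        have h2 := congrArg (MvPolynomial.rename (⇑(Equiv.swap (0 : Fin (m + 1)) i))) h1
        rwa [MvPolynomial.rename_rename, hswap, MvPolynomial.rename_id, map_zero] at h2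
      have hirr : ∀ q : Polynomial (MvPolynomial (Fin m) ℤ), 1 ≤ q.natDegree → ¬ q ^ d ∣ Fi := by
        intro q hq hdvdq
        apply hpf
        set G := (MvPolynomial.finSuccEquiv ℤ m).symm q with hG
        have hGq : MvPolynomial.finSuccEquiv ℤ m G = q :=
          (MvPolynomial.finSuccEquiv ℤ m).apply_symm_apply q
        refine ⟨MvPolynomial.rename (⇑(Equiv.swap (0 : Fin (m + 1)) i)) G, ?_, ?_⟩
        · have h1 : 0 < MvPolynomial.degreeOf 0 G := by
            rw [← MvPolynomial.natDegree_finSuccEquiv, hGq]; exact hq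
          have h2 := MvPolynomial.degreeOf_rename_of_injective
            (Equiv.injective (Equiv.swap (0 : Fin (m + 1)) i)) (0 : Fin (m + 1)) (p := G)
          rw [Equiv.swap_apply_left] at h2
          exact lt_of_lt_of_le (by rw [h2]; exact h1)
            (MvPolynomial.degreeOf_le_totalDegree _ i)
        · have h3 : G ^ d ∣ MvPolynomial.rename (⇑(Equiv.swap (0 : Fin (m + 1)) i)) F := by
            have h4 := map_dvd (MvPolynomial.finSuccEquiv ℤ m).symm hdvdq
            rw [map_pow] at h4
            rw [hFi] at h4
            rwa [(MvPolynomial.finSuccEquiv ℤ m).symm_apply_apply] at h4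
          have h5 := map_dvd (MvPolynomial.rename (⇑(Equiv.swap (0 : Fin (m + 1)) i))) h3
          rw [map_pow] at h5
          rwa [MvPolynomial.rename_rename, hswap, MvPolynomial.rename_id] at h5
      obtain ⟨B, c, hc0, hsum⟩ := exists_certificate hd Fi hFi0 hirr
      exact ⟨B, c, hc0, hsum⟩
    choose B c hc0 hBc using hmain
    choose t ht using fun i => MvPolynomial.ne_zero_iff.mp (hc0 i)
    set N : ℤ := ∏ i : Fin (m + 1), MvPolynomial.coeff (t i) (c i) with hN
    have hN0 : N ≠ 0 := Finset.prod_ne_zero_iff.mpr fun i _ => ht i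
    apply Set.Finite.subset (Set.finite_Iic N.natAbs)
    rintro p ⟨hp, g, htd, hdvd⟩
    simp only [Set.mem_Iic]
    have hpdvd : (p : ℤ) ∣ N := by
      by_contra hnd
      have hndi : ∀ i, ¬ ((p : ℤ) ∣ MvPolynomial.coeff (t i) (c i)) := fun i hdi =>
        hnd (hdi.trans (Finset.dvd_prod_of_mem _ (Finset.mem_univ i)))
      haveI : Fact p.Prime := ⟨hp⟩
      set ψ : ℤ →+* ZMod p := Int.castRingHom (ZMod p) with hψ
      have hex : ∃ i, 0 < MvPolynomial.degreeOf i g := by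
        by_contra hcon
        push_neg at hcon
        have h0 : g.totalDegree = 0 := by
          rw [MvPolynomial.totalDegree_eq_zero_iff]
          intro mm hmm x
          have h1 : mm x ≤ MvPolynomial.degreeOf x g := by
            rw [MvPolynomial.degreeOf_eq_sup]
            exact Finset.le_sup (f := fun s => s x) hmm
          have h2 := hcon x
          omega
        omega
      obtain ⟨i, hi⟩ := hex
      have hci : MvPolynomial.map ψ (c i) ≠ 0 := by
        intro h0
        apply hndi i
        have h1 := congrArg (MvPolynomial.coeff (t i)) h0
        rw [MvPolynomial.coeff_map] at h1
        simpa [hψ, ZMod.intCast_zmod_eq_zero_iff_dvd] using h1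
      set g1 := MvPolynomial.finSuccEquiv (ZMod p) m
        (MvPolynomial.rename (⇑(Equiv.swap (0 : Fin (m + 1)) i)) g) with hg1
      have hg1deg : 0 < g1.natDegree := by
        rw [hg1, MvPolynomial.natDegree_finSuccEquiv]
        have h2 := MvPolynomial.degreeOf_rename_of_injective
          (Equiv.injective (Equiv.swap (0 : Fin (m + 1)) i)) i (p := g)
        rw [Equiv.swap_apply_right] at h2
        rw [h2]; exact hi
      have hdvd1 : g1 ^ d ∣ Polynomial.map (MvPolynomial.map ψ)
          (MvPolynomial.finSuccEquiv ℤ m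
            (MvPolynomial.rename (⇑(Equiv.swap (0 : Fin (m + 1)) i)) F)) := by
        have h2 : (MvPolynomial.rename (⇑(Equiv.swap (0 : Fin (m + 1)) i)) g) ^ d ∣
            MvPolynomial.rename (⇑(Equiv.swap (0 : Fin (m + 1)) i)) (MvPolynomial.map ψ F) := by
          rw [← map_pow]
          exact map_dvd _ hdvd
        rw [← MvPolynomial.map_rename] at h2
        have h3 := map_dvd (MvPolynomial.finSuccEquiv (ZMod p) m) h2
        rw [map_pow] at h3
        rwa [finSuccEquiv_map_commute] at h3
      have hcert : ∑ j : Fin d, (B i j).map (MvPolynomial.map ψ) *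
          Polynomial.derivative^[(j : ℕ)] (Polynomial.map (MvPolynomial.map ψ)
            (MvPolynomial.finSuccEquiv ℤ m
              (MvPolynomial.rename (⇑(Equiv.swap (0 : Fin (m + 1)) i)) F))) =
          Polynomial.C (MvPolynomial.map ψ (c i)) := by
        have h4 := congrArg (Polynomial.map (MvPolynomial.map ψ)) (hBc i)
        rw [Polynomial.map_sum, Polynomial.map_C] at h4
        rw [← h4]
        refine Finset.sum_congr rfl fun j _ => ?_
        rw [Polynomial.map_mul, Polynomial.iterate_derivative_map]
      have hdvdC : g1 ∣ Polynomial.C (MvPolynomial.map ψ (c i)) := by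
        rw [← hcert]
        refine Finset.dvd_sum fun j _ => ?_
        refine Dvd.dvd.mul_left ?_ _
        have h5 := pow_dvd_iterate_derivative_of_pow_dvd hdvd1 (j : ℕ)
        have hj := j.isLt
        exact (dvd_pow_self g1 (by omega : d - (j : ℕ) ≠ 0)).trans h5
      have hfin : g1.natDegree = 0 := by
        have h6 := Polynomial.natDegree_le_of_dvd hdvdC (Polynomial.C_ne_zero.mpr hci)
        simpa using h6
      omega
    have hdvdnat : p ∣ N.natAbs := by
      have h7 := Int.natAbs_dvd_natAbs.mpr hpdvd
      simpa using h7
    exact Nat.le_of_dvd (Int.natAbs_pos.mpr hN0) hdvdnat
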